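/- Let K, N ≥ 1, let x ∈ ℝ^N be nonzero, and define the quadratic function f : ℝ^K × ℝ^{K×N} → ℝ by f(v, U) = v⊤ U x. Then the (constant) Hessian of f, viewed as a symmetric linear operator on ℝ^{K + KN}, has exactly the eigenvalues ‖x‖ with multiplicity K, −‖x‖ with multiplicity K, and 0 with multiplicity K(N − 1), where ‖x‖ is the Euclidean norm of x. Explicitly: the zero eigenspace consists of pairs (0, W) with W x = 0, and for each standard basis vector e_i of ℝ^K the pairs (‖x‖ e_i, ± e_i x⊤) are eigenvectors with eigenvalues ±‖x‖. -/

import Mathlib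

open Matrix

/-- The parameter space of a one-hidden-layer linear network: `(v, U)` with
`v ∈ ℝ^K` and `U ∈ ℝ^{K×N}`, i.e. `ℝ^{K + KN}`. -/
abbrev ParamSpace (K N : ℕ) := (Fin K → ℝ) × Matrix (Fin K) (Fin N) ℝ

/-- The standard Euclidean inner product on `ParamSpace K N ≃ ℝ^{K + KN}`. -/
def pairInner {K N : ℕ} (p q : ParamSpace K N) : ℝ :=
  p.1 ⬝ᵥ q.1 + ∑ i, ∑ j, p.2 i j * q.2 i j

lemma pairInner_comm {K N : ℕ} (p q : ParamSpace K N) : pairInner p q = pairInner q p := by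
  simp [pairInner, dotProduct, mul_comm]

lemma pairInner_add_right {K N : ℕ} (p q r : ParamSpace K N) :
    pairInner p (q + r) = pairInner p q + pairInner p r := by
  simp [pairInner, dotProduct, mul_add, Finset.sum_add_distrib]
  ring

lemma pairInner_add_left {K N : ℕ} (p q r : ParamSpace K N) :
    pairInner (p + q) r = pairInner p r + pairInner q r := by
  rw [pairInner_comm, pairInner_add_right, pairInner_comm r p, pairInner_comm r q]

lemma pairInner_sub_right {K N : ℕ} (p q r : ParamSpace K N) :
    pairInner p (q - r) = pairInner p q - pairInner p r := by
  simp [pairInner, dotProduct, mul_sub, Finset.sum_sub_distrib]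
  ring

lemma pairInner_self_eq_zero {K N : ℕ} {p : ParamSpace K N} (h : pairInner p p = 0) : p = 0 := by
  have h1 : (0:ℝ) ≤ ∑ i, p.1 i * p.1 i :=
    Finset.sum_nonneg fun i _ => mul_self_nonneg _
  have h2 : (0:ℝ) ≤ ∑ i, ∑ j, p.2 i j * p.2 i j :=
    Finset.sum_nonneg fun i _ => Finset.sum_nonneg fun j _ => mul_self_nonneg _
  rw [pairInner, dotProduct] at h
  have e1 : ∑ i, p.1 i * p.1 i = 0 := by linarith
  have e2 : ∑ i, ∑ j, p.2 i j * p.2 i j = 0 := by linarith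
  have f1 : ∀ i, p.1 i = 0 := by
    intro i
    have := (Finset.sum_eq_zero_iff_of_nonneg (fun i _ => mul_self_nonneg (p.1 i))).1 e1 i
      (Finset.mem_univ i)
    exact mul_self_eq_zero.1 this
  have f2 : ∀ i j, p.2 i j = 0 := by
    intro i j
    have hi := (Finset.sum_eq_zero_iff_of_nonneg
      (fun i _ => Finset.sum_nonneg fun j _ => mul_self_nonneg (p.2 i j))).1 e2 i
      (Finset.mem_univ i)
    have := (Finset.sum_eq_zero_iff_of_nonneg (fun j _ => mul_self_nonneg (p.2 i j))).1 hi j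
      (Finset.mem_univ j)
    exact mul_self_eq_zero.1 this
  ext i
  · exact f1 i
  · exact f2 _ _

/-- Eigenstructure of the (constant) Hessian of `f(v, U) = vᵀ U x` for a
nonzero datapoint `x ∈ ℝ^N`.  `H` is the Hessian of the quadratic `f`,
characterized as the symmetric operator with `f p = (1/2) ⟨p, H p⟩`.  Its only
eigenvalues are `‖x‖`, `−‖x‖`, `0`, with multiplicities `K`, `K`, `K(N−1)`;
the zero eigenspace consists of the pairs `(0, W)` with `W x = 0`; and for
each standard basis vector `e_i` of `ℝ^K`, `(‖x‖ e_i, ± e_i xᵀ)` is an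
eigenvector with eigenvalue `±‖x‖`. -/
theorem stmt17 (K N : ℕ) (hK : 1 ≤ K) (hN : 1 ≤ N)
    (x : EuclideanSpace ℝ (Fin N)) (hx : x ≠ 0)
    (f : ParamSpace K N → ℝ)
    (hf : ∀ p : ParamSpace K N, f p = p.1 ⬝ᵥ p.2.mulVec x)
    (H : ParamSpace K N →ₗ[ℝ] ParamSpace K N)
    (hsym : ∀ p q : ParamSpace K N, pairInner (H p) q = pairInner p (H q))
    (hquad : ∀ p : ParamSpace K N, f p = (1 / 2) * pairInner p (H p)) :
    (∀ c : ℝ, Module.End.HasEigenvalue H c → c = ‖x‖ ∨ c = -‖x‖ ∨ c = 0) ∧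
    Module.End.HasEigenvalue H ‖x‖ ∧
    Module.End.HasEigenvalue H (-‖x‖) ∧
    Module.finrank ℝ (Module.End.eigenspace H ‖x‖) = K ∧
    Module.finrank ℝ (Module.End.eigenspace H (-‖x‖)) = K ∧
    Module.finrank ℝ (Module.End.eigenspace H 0) = K * (N - 1) ∧
    ((Module.End.eigenspace H 0 : Set (ParamSpace K N))
      = {p : ParamSpace K N | p.1 = 0 ∧ p.2.mulVec x = 0}) ∧
    (∀ i : Fin K,
      ((Pi.single i ‖x‖,
        Matrix.of fun a j => (Pi.single i (1 : ℝ) : Fin K → ℝ) a * x j) :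
        ParamSpace K N) ∈ Module.End.eigenspace H ‖x‖) ∧
    (∀ i : Fin K,
      ((Pi.single i ‖x‖,
        -(Matrix.of fun a j => (Pi.single i (1 : ℝ) : Fin K → ℝ) a * x j :
          Matrix (Fin K) (Fin N) ℝ)) : ParamSpace K N) ∈ Module.End.eigenspace H (-‖x‖)) := by
  classical
  -- basic facts about x
  have hxx : ∑ j, x j * x j = ‖x‖ ^ 2 := by
    rw [EuclideanSpace.norm_eq, Real.sq_sqrt (Finset.sum_nonneg fun i _ => sq_nonneg _)]
    simp [Real.norm_eq_abs, sq]
  have hnx : ‖x‖ ≠ 0 := norm_ne_zero_iff.2 hx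
  obtain ⟨j0, hj0⟩ : ∃ j, x j ≠ 0 := by
    by_contra h
    push_neg at h
    exact hx (by ext j; exact h j)
  -- the bilinear form of H
  have hbil : ∀ p q : ParamSpace K N,
      pairInner p (H q) = p.1 ⬝ᵥ q.2.mulVec x + q.1 ⬝ᵥ p.2.mulVec x := by
    intro p q
    have h1 := hquad (p + q)
    rw [hf, map_add, pairInner_add_right, pairInner_add_left, pairInner_add_left] at h1
    have h2 := hquad p; rw [hf] at h2
    have h3 := hquad q; rw [hf] at h3
    have hqp : pairInner q (H p) = pairInner p (H q) := by
      rw [pairInner_comm, hsym]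
    rw [hqp] at h1
    have hexp : (p + q).1 ⬝ᵥ (p + q).2.mulVec x
        = p.1 ⬝ᵥ p.2.mulVec x + q.1 ⬝ᵥ q.2.mulVec x
          + (p.1 ⬝ᵥ q.2.mulVec x + q.1 ⬝ᵥ p.2.mulVec x) := by
      show (p.1 + q.1) ⬝ᵥ (p.2 + q.2).mulVec x = _
      rw [add_mulVec, add_dotProduct, dotProduct_add, dotProduct_add]
      ring
    rw [hexp] at h1
    linarith
  -- explicit formula for H
  have hH : ∀ q : ParamSpace K N,
      H q = (q.2.mulVec x, Matrix.of fun a j => q.1 a * x j) := by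
    intro q
    set T : ParamSpace K N := (q.2.mulVec x, Matrix.of fun a j => q.1 a * x j) with hT
    have hTin : ∀ p : ParamSpace K N,
        pairInner p T = p.1 ⬝ᵥ q.2.mulVec x + q.1 ⬝ᵥ p.2.mulVec x := by
      intro p
      have hdot : q.1 ⬝ᵥ p.2.mulVec x = ∑ i, q.1 i * ∑ j, p.2 i j * x j := by
        simp [dotProduct, Matrix.mulVec]
      rw [pairInner, hdot]
      refine congrArg₂ (· + ·) rfl ?_
      refine Finset.sum_congr rfl fun i _ => ?_
      rw [Finset.mul_sum]
      exact Finset.sum_congr rfl fun j _ => by show p.2 i j * (q.1 i * x j) = _; ring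
    have key : ∀ p, pairInner p (H q - T) = 0 := by
      intro p
      rw [pairInner_sub_right, hbil, hTin]; ring
    have hz : H q - T = 0 :=
      pairInner_self_eq_zero (by rw [pairInner_comm]; exact key (H q - T))
    exact sub_eq_zero.1 hz
  -- eigenvector membership (positive)
  have memPos : ∀ i : Fin K,
      ((Pi.single i ‖x‖,
        Matrix.of fun a j => (Pi.single i (1 : ℝ) : Fin K → ℝ) a * x j) :
        ParamSpace K N) ∈ Module.End.eigenspace H ‖x‖ := by
    intro i
    rw [Module.End.mem_eigenspace_iff, hH]
    refine Prod.ext ?_ ?_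
    · funext a
      simp only [Matrix.mulVec, dotProduct, Matrix.of_apply, Prod.smul_fst]
      rcases eq_or_ne a i with rfl | hne
      · simp [Pi.single_eq_same, hxx, sq]
      · simp [Pi.single_apply, hne]
    · funext a j
      simp only [Matrix.of_apply, Prod.smul_snd, Matrix.smul_apply, smul_eq_mul]
      rcases eq_or_ne a i with rfl | hne
      · simp [Pi.single_eq_same]
      · simp [Pi.single_apply, hne]
  -- eigenvector membership (negative)
  have memNeg : ∀ i : Fin K,
      ((Pi.single i ‖x‖,
        -(Matrix.of fun a j => (Pi.single i (1 : ℝ) : Fin K → ℝ) a * x j :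
          Matrix (Fin K) (Fin N) ℝ)) : ParamSpace K N) ∈ Module.End.eigenspace H (-‖x‖) := by
    intro i
    rw [Module.End.mem_eigenspace_iff, hH]
    refine Prod.ext ?_ ?_
    · funext a
      simp only [Matrix.mulVec, dotProduct, Matrix.neg_apply, Matrix.of_apply, Prod.smul_fst]
      rcases eq_or_ne a i with rfl | hne
      · simp [Pi.single_eq_same, hxx, sq]
      · simp [Pi.single_apply, hne]
    · funext a j
      simp only [Matrix.of_apply, Prod.smul_snd, Matrix.smul_apply, Matrix.neg_apply,
        smul_eq_mul]
      rcases eq_or_ne a i with rfl | hne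
      · simp [Pi.single_eq_same]
      · simp [Pi.single_apply, hne]
  -- nonzero eigenvector
  have i0 : Fin K := ⟨0, hK⟩
  have evec_ne : ((Pi.single i0 ‖x‖,
      Matrix.of fun a j => (Pi.single i0 (1 : ℝ) : Fin K → ℝ) a * x j) :
      ParamSpace K N) ≠ 0 := by
    intro h
    have h1 : (Pi.single i0 ‖x‖ : Fin K → ℝ) = 0 := congrArg Prod.fst h
    have := congrFun h1 i0
    simp at this
    exact hx this
  have evec_ne' : ((Pi.single i0 ‖x‖,
      -(Matrix.of fun a j => (Pi.single i0 (1 : ℝ) : Fin K → ℝ) a * x j :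
        Matrix (Fin K) (Fin N) ℝ)) : ParamSpace K N) ≠ 0 := by
    intro h
    have h1 : (Pi.single i0 ‖x‖ : Fin K → ℝ) = 0 := congrArg Prod.fst h
    have := congrFun h1 i0
    simp at this
    exact hx this
  have hasPos : Module.End.HasEigenvalue H ‖x‖ :=
    Module.End.hasEigenvalue_of_hasEigenvector ⟨memPos i0, evec_ne⟩
  have hasNeg : Module.End.HasEigenvalue H (-‖x‖) :=
    Module.End.hasEigenvalue_of_hasEigenvector ⟨memNeg i0, evec_ne'⟩
  -- eigenvalue classification
  have classif : ∀ c : ℝ, Module.End.HasEigenvalue H c → c = ‖x‖ ∨ c = -‖x‖ ∨ c = 0 := by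
    intro c hc
    obtain ⟨p, hp, hpne⟩ := hc.exists_hasEigenvector
    rw [Module.End.mem_eigenspace_iff, hH] at hp
    have h1 : p.2.mulVec x = c • p.1 := congrArg Prod.fst hp
    have h2 : (Matrix.of fun a j => p.1 a * x j) = c • p.2 := congrArg Prod.snd hp
    by_cases hp1 : p.1 = 0
    · -- then c • p.2 = 0
      right; right
      by_contra hc0
      have hp2 : p.2 = 0 := by
        funext a j
        have := congrFun (congrFun h2 a) j
        simp only [Matrix.of_apply, hp1, Pi.zero_apply, zero_mul, Matrix.smul_apply,
          smul_eq_mul] at this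
        have := this.symm
        exact (mul_eq_zero.1 this).resolve_left hc0
      exact hpne (Prod.ext hp1 hp2)
    · -- apply mulVec to h2
      obtain ⟨a, ha⟩ : ∃ a, p.1 a ≠ 0 := by
        by_contra h; push_neg at h; exact hp1 (funext h)
      have key : p.1 a * ‖x‖ ^ 2 = c * (c * p.1 a) := by
        have h2a : ∀ j, p.1 a * x j = c * p.2 a j := fun j => by
          have := congrFun (congrFun h2 a) j
          simpa using this
        have h1a : ∑ j, p.2 a j * x j = c * p.1 a := by
          have := congrFun h1 a
          simpa [Matrix.mulVec, dotProduct] using this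
        calc p.1 a * ‖x‖ ^ 2 = ∑ j, p.1 a * x j * x j := by
              rw [← hxx, Finset.mul_sum]
              exact Finset.sum_congr rfl fun j _ => by ring
          _ = ∑ j, c * (p.2 a j * x j) := by
              exact Finset.sum_congr rfl fun j _ => by rw [h2a j]; ring
          _ = c * (c * p.1 a) := by rw [← Finset.mul_sum, h1a]
      have hc2 : c ^ 2 = ‖x‖ ^ 2 := by
        have : p.1 a * (‖x‖ ^ 2 - c ^ 2) = 0 := by ring_nf; nlinarith [key]
        have := (mul_eq_zero.1 this).resolve_left ha
        linarith
      rcases sq_eq_sq_iff_eq_or_eq_neg.1 hc2 with h | h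
      · exact Or.inl h
      · exact Or.inr (Or.inl h)
  -- zero eigenspace as a set
  have zeroSet : ((Module.End.eigenspace H 0 : Submodule ℝ (ParamSpace K N)) :
      Set (ParamSpace K N)) = {p : ParamSpace K N | p.1 = 0 ∧ p.2.mulVec x = 0} := by
    ext p
    simp only [SetLike.mem_coe, Module.End.mem_eigenspace_iff, zero_smul, Set.mem_setOf_eq, hH]
    constructor
    · intro h
      have h1 : p.2.mulVec x = 0 := congrArg Prod.fst h
      have h2 : (Matrix.of fun a j => p.1 a * x j) = 0 := congrArg Prod.snd h
      refine ⟨funext fun a => ?_, h1⟩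
      have := congrFun (congrFun h2 a) j0
      simp only [Matrix.of_apply, Matrix.zero_apply] at this
      exact (mul_eq_zero.1 this).resolve_right hj0
    · rintro ⟨h1, h2⟩
      refine Prod.ext ?_ ?_
      · simpa using h2
      · funext a j
        simp [h1]
  -- finrank of positive eigenspace
  have finPos : Module.finrank ℝ (Module.End.eigenspace H ‖x‖) = K := by
    let φ : (Fin K → ℝ) →ₗ[ℝ] ParamSpace K N :=
      { toFun := fun v => (v, Matrix.of fun a j => ‖x‖⁻¹ * v a * x j)
        map_add' := by
          intro v w
          refine Prod.ext rfl ?_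
          funext a j
          simp only [Matrix.of_apply, Pi.add_apply, Matrix.add_apply, Prod.snd_add]
          ring
        map_smul' := by
          intro c v
          refine Prod.ext rfl ?_
          funext a j
          simp only [Matrix.of_apply, Pi.smul_apply, Matrix.smul_apply, smul_eq_mul,
            RingHom.id_apply, Prod.smul_snd]
          ring }
    have hrange : LinearMap.range φ = Module.End.eigenspace H ‖x‖ := by
      ext p
      rw [LinearMap.mem_range, Module.End.mem_eigenspace_iff, hH]
      constructor
      · rintro ⟨v, rfl⟩
        refine Prod.ext ?_ ?_
        · funext a
          simp only [Matrix.mulVec, dotProduct, Matrix.of_apply, Prod.smul_fst, Pi.smul_apply,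
            smul_eq_mul, φ, LinearMap.coe_mk, AddHom.coe_mk]
          have : ∑ j, ‖x‖⁻¹ * v a * x j * x j = ‖x‖⁻¹ * v a * ∑ j, x j * x j := by
            rw [Finset.mul_sum]; exact Finset.sum_congr rfl fun j _ => by ring
          rw [this, hxx]
          field_simp
        · funext a j
          simp only [Matrix.of_apply, Prod.smul_snd, Matrix.smul_apply, smul_eq_mul, φ,
            LinearMap.coe_mk, AddHom.coe_mk]
          field_simp
      · intro h
        have h1 : p.2.mulVec x = ‖x‖ • p.1 := congrArg Prod.fst h
        have h2 : (Matrix.of fun a j => p.1 a * x j) = ‖x‖ • p.2 := congrArg Prod.snd h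
        refine ⟨p.1, ?_⟩
        refine Prod.ext rfl ?_
        funext a j
        have := congrFun (congrFun h2 a) j
        simp only [Matrix.of_apply, Matrix.smul_apply, smul_eq_mul] at this
        show ‖x‖⁻¹ * p.1 a * x j = p.2 a j
        field_simp
        linarith [this]
    have hinj : Function.Injective φ := by
      intro v w h
      exact congrArg Prod.fst h
    rw [← hrange, LinearMap.finrank_range_of_inj hinj]
    simp
  -- finrank of negative eigenspace
  have finNeg : Module.finrank ℝ (Module.End.eigenspace H (-‖x‖)) = K := by
    let φ : (Fin K → ℝ) →ₗ[ℝ] ParamSpace K N :=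
      { toFun := fun v => (v, Matrix.of fun a j => -(‖x‖⁻¹ * v a * x j))
        map_add' := by
          intro v w
          refine Prod.ext rfl ?_
          funext a j
          simp only [Matrix.of_apply, Pi.add_apply, Matrix.add_apply, Prod.snd_add]
          ring
        map_smul' := by
          intro c v
          refine Prod.ext rfl ?_
          funext a j
          simp only [Matrix.of_apply, Pi.smul_apply, Matrix.smul_apply, smul_eq_mul,
            RingHom.id_apply, Prod.smul_snd]
          ring }
    have hrange : LinearMap.range φ = Module.End.eigenspace H (-‖x‖) := by
      ext p
      rw [LinearMap.mem_range, Module.End.mem_eigenspace_iff, hH]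
      constructor
      · rintro ⟨v, rfl⟩
        refine Prod.ext ?_ ?_
        · funext a
          simp only [Matrix.mulVec, dotProduct, Matrix.of_apply, Prod.smul_fst, Pi.smul_apply,
            smul_eq_mul, φ, LinearMap.coe_mk, AddHom.coe_mk]
          have : ∑ j, -(‖x‖⁻¹ * v a * x j) * x j = -(‖x‖⁻¹ * v a) * ∑ j, x j * x j := by
            rw [Finset.mul_sum]; exact Finset.sum_congr rfl fun j _ => by ring
          rw [this, hxx]
          field_simp
        · funext a j
          simp only [Matrix.of_apply, Prod.smul_snd, Matrix.smul_apply, smul_eq_mul, φ,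
            LinearMap.coe_mk, AddHom.coe_mk]
          field_simp
      · intro h
        have h1 : p.2.mulVec x = (-‖x‖) • p.1 := congrArg Prod.fst h
        have h2 : (Matrix.of fun a j => p.1 a * x j) = (-‖x‖) • p.2 := congrArg Prod.snd h
        refine ⟨p.1, ?_⟩
        refine Prod.ext rfl ?_
        funext a j
        have := congrFun (congrFun h2 a) j
        simp only [Matrix.of_apply, Matrix.smul_apply, smul_eq_mul] at this
        show -(‖x‖⁻¹ * p.1 a * x j) = p.2 a j
        field_simp
        linarith [this]
    have hinj : Function.Injective φ := by
      intro v w h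
      exact congrArg Prod.fst h
    rw [← hrange, LinearMap.finrank_range_of_inj hinj]
    simp
  -- finrank of zero eigenspace
  have finZero : Module.finrank ℝ (Module.End.eigenspace H 0) = K * (N - 1) := by
    let L : Matrix (Fin K) (Fin N) ℝ →ₗ[ℝ] (Fin K → ℝ) :=
      { toFun := fun W => W.mulVec x
        map_add' := fun W W' => add_mulVec W W' x
        map_smul' := fun c W => by
          funext a
          simp [Matrix.mulVec, dotProduct, Finset.mul_sum, mul_assoc] }
    let ψ : Matrix (Fin K) (Fin N) ℝ →ₗ[ℝ] ParamSpace K N :=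
      { toFun := fun W => (0, W)
        map_add' := fun W W' => by simp [Prod.ext_iff]
        map_smul' := fun c W => by simp [Prod.ext_iff] }
    have hψinj : Function.Injective ψ := by
      intro W W' h
      exact congrArg Prod.snd h
    have heq : Module.End.eigenspace H 0 = (LinearMap.ker L).map ψ := by
      apply SetLike.coe_injective
      rw [zeroSet]
      ext p
      simp only [Submodule.map_coe, Set.mem_image, SetLike.mem_coe, LinearMap.mem_ker,
        Set.mem_setOf_eq]
      constructor
      · rintro ⟨h1, h2⟩
        exact ⟨p.2, h2, Prod.ext h1.symm rfl⟩
      · rintro ⟨W, hW, rfl⟩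
        exact ⟨rfl, hW⟩
    have hLsurj : Function.Surjective L := by
      intro w
      refine ⟨Matrix.of fun a j => if j = j0 then w a * (x j0)⁻¹ else 0, ?_⟩
      funext a
      show ∑ j, (if j = j0 then w a * (x j0)⁻¹ else 0) * x j = w a
      rw [Finset.sum_eq_single j0]
      · field_simp; rw [if_pos trivial]; field_simp
      · intro b _ hb; simp [hb]
      · intro h; exact absurd (Finset.mem_univ j0) h
    have hker : Module.finrank ℝ (LinearMap.ker L) = K * (N - 1) := by
      have hrn := LinearMap.finrank_range_add_finrank_ker L
      have hrange : LinearMap.range L = ⊤ := LinearMap.range_eq_top.2 hLsurj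
      rw [hrange] at hrn
      have hdom : Module.finrank ℝ (Matrix (Fin K) (Fin N) ℝ) = K * N := by
        simp [Module.finrank_matrix]
      have htop : Module.finrank ℝ (⊤ : Submodule ℝ (Fin K → ℝ)) = K := by
        rw [finrank_top]; simp
      rw [hdom, htop] at hrn
      obtain ⟨M, rfl⟩ : ∃ M, N = M + 1 := ⟨N - 1, by omega⟩
      have : K * (M + 1) = K * M + K := by ring
      simp only [Nat.add_sub_cancel]
      omega
    rw [heq, ← hker]
    exact (Submodule.equivMapOfInjective ψ hψinj (LinearMap.ker L)).finrank_eq.symm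
  exact ⟨classif, hasPos, hasNeg, finPos, finNeg, finZero, zeroSet, memPos, memNeg⟩
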